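/- Let V↑(H) be the triangular lattice of top endpoints of vertical edges of the hexagonal lattice H, and let T be the triangular lattice of face-centers of H. For any ξ ⊆ V↑(H) and any u, v ∈ ξ, the vertices u and v lie in the same connected component of the subgraph of V↑(H) induced by ξ if and only if the corners of the triangle of T corresponding to u are connected in the spanning subgraph (T, Δ(ξ)) to the corners of the triangle corresponding to v. In particular, ξ contains an infinite connected component (in V↑(H)) if and only if Δ(ξ) contains an infinite connected component (in T). -/

import Mathlib

noncomputable section

/-- The center of the face of the hexagonal lattice indexed by `(k, ℓ)`:
the point `k + ℓ e^{iπ/3}` of the triangular lattice. -/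
def triPt (k l : ℤ) : ℂ := (k : ℂ) + (l : ℂ) * Complex.exp (Real.pi * Complex.I / 3)

/-- The triangular lattice `{k + ℓ e^{iπ/3} : k, ℓ ∈ ℤ}` of face-centers of the
hexagonal lattice `H`. -/
def TriPts : Set ℂ := {z | ∃ k l : ℤ, z = triPt k l}

/-- Half of a vertical edge of the hexagonal lattice. -/
def hexOffset : ℂ := Complex.I / (Real.sqrt 3 : ℝ)

/-- The set `V↑(H)` of top endpoints of vertical edges of `H`. -/
def UpPts : Set ℂ := {z | ∃ w ∈ TriPts, z = w - hexOffset}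

/-- The triangular lattice `V↑(H)`, nearest neighbors (distance `1`) adjacent. -/
def UpGraph : SimpleGraph ↥UpPts where
  Adj u v := ‖(u : ℂ) - (v : ℂ)‖ = 1
  symm := by
    constructor
    intro u v h
    rw [norm_sub_rev]
    exact h
  loopless := by
    constructor
    intro v h
    simp only [sub_self, norm_zero] at h
    exact one_ne_zero h.symm

/-- The triangular lattice `T` of face-centers of `H`, nearest neighbors adjacent. -/
def TriGraph : SimpleGraph ↥TriPts where
  Adj u v := ‖(u : ℂ) - (v : ℂ)‖ = 1
  symm := by
    constructor
    intro u v h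
    rw [norm_sub_rev]
    exact h
  loopless := by
    constructor
    intro v h
    simp only [sub_self, norm_zero] at h
    exact one_ne_zero h.symm

/-- `z` is a corner of the upward triangle of `T` corresponding to `p ∈ V↑(H)`: one of the
three face-centers of `H` at distance `1/√3` from `p` (`p` belongs to exactly these three
faces of `H`). -/
def IsTriCorner (p : ↥UpPts) (z : ↥TriPts) : Prop :=
  ‖(z : ℂ) - (p : ℂ)‖ = 1 / Real.sqrt 3

/-- The bond percolation `Δ(ξ)` on `T`: all edges of `T` belonging to the upward triangular
faces corresponding to the vertices of `ξ`. -/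
def DeltaEdges (ξ : Set ↥UpPts) : Set (Sym2 ↥TriPts) :=
  {e | ∃ p ∈ ξ, ∃ z w : ↥TriPts, z ≠ w ∧ IsTriCorner p z ∧ IsTriCorner p w ∧ e = s(z, w)}

lemma e3_eq : Complex.exp (Real.pi * Complex.I / 3) = Complex.mk (1/2) (Real.sqrt 3 / 2) := by
  have h : (Real.pi : ℂ) * Complex.I / 3 = ((Real.pi / 3 : ℝ) : ℂ) * Complex.I := by
    push_cast; ring
  rw [h, Complex.exp_mul_I, ← Complex.ofReal_cos, ← Complex.ofReal_sin]
  apply Complex.ext <;>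
    simp [Real.cos_pi_div_three, Real.sin_pi_div_three]

lemma sqrt3_sq : Real.sqrt 3 * Real.sqrt 3 = 3 := Real.mul_self_sqrt (by norm_num)
lemma sqrt3_pos : 0 < Real.sqrt 3 := Real.sqrt_pos.2 (by norm_num)

lemma hexOffset_eq : hexOffset = Complex.mk 0 ((Real.sqrt 3)⁻¹) := by
  apply Complex.ext <;>
    simp [hexOffset, Complex.div_re, Complex.div_im, Complex.normSq_apply]
  field_simp
  exact Real.sq_sqrt (by norm_num)

lemma normSq1 (m n : ℤ) :
    Complex.normSq ((m:ℂ) + (n:ℂ) * Complex.exp (Real.pi * Complex.I / 3))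
      = ((m^2 + m*n + n^2 : ℤ) : ℝ) := by
  rw [e3_eq]
  simp only [Complex.normSq_apply, Complex.add_re, Complex.add_im, Complex.mul_re,
    Complex.mul_im, Complex.intCast_re, Complex.intCast_im]
  push_cast
  linear_combination ((n:ℝ)^2 / 4) * sqrt3_sq

lemma normSq2 (m n : ℤ) :
    Complex.normSq ((m:ℂ) + (n:ℂ) * Complex.exp (Real.pi * Complex.I / 3) + hexOffset)
      = ((m^2 + m*n + n^2 + n : ℤ) : ℝ) + 1/3 := by
  rw [e3_eq, hexOffset_eq]
  simp only [Complex.normSq_apply, Complex.add_re, Complex.add_im, Complex.mul_re,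
    Complex.mul_im, Complex.intCast_re, Complex.intCast_im]
  have h3 : Real.sqrt 3 ≠ 0 := ne_of_gt sqrt3_pos
  push_cast
  field_simp
  linear_combination (-4 + 3*(n:ℝ)^2*Real.sqrt 3^2) * sqrt3_sq

lemma solve_corner (m n : ℤ) (h : m^2+m*n+n^2+n = 0) :
    (m=0∧n=0) ∨ (m=0∧n=-1) ∨ (m=1∧n=-1) := by
  have key : 3*(2*m+n)^2 + (3*n+2)^2 = 4 := by linear_combination 12*h
  have h1 : -1 ≤ 2*m+n := by nlinarith [sq_nonneg (2*m+n+1), sq_nonneg (3*n+2)]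
  have h2 : 2*m+n ≤ 1 := by nlinarith [sq_nonneg (2*m+n-1), sq_nonneg (3*n+2)]
  have h3 : -2 ≤ 3*n+2 := by nlinarith [sq_nonneg (3*n+2+2), sq_nonneg (2*m+n)]
  have h4 : 3*n+2 ≤ 2 := by nlinarith [sq_nonneg (3*n+2-2), sq_nonneg (2*m+n)]
  omega

lemma solve_unit (m n : ℤ) (h : m^2+m*n+n^2 = 1) :
    (m=1∧n=0) ∨ (m=-1∧n=0) ∨ (m=0∧n=1) ∨ (m=0∧n=-1) ∨ (m=1∧n=-1) ∨ (m=-1∧n=1) := by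
  have key : (2*m+n)^2 + 3*n^2 = 4 := by linear_combination 4*h
  have h1 : -1 ≤ n := by nlinarith [sq_nonneg (n+1), sq_nonneg (2*m+n)]
  have h2 : n ≤ 1 := by nlinarith [sq_nonneg (n-1), sq_nonneg (2*m+n)]
  have h3 : -2 ≤ 2*m+n := by nlinarith [sq_nonneg (2*m+n+2), sq_nonneg n]
  have h4 : 2*m+n ≤ 2 := by nlinarith [sq_nonneg (2*m+n-2), sq_nonneg n]
  have h5 : -1 ≤ m := by omega
  have h6 : m ≤ 1 := by omega
  interval_cases m <;> interval_cases n <;> omega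

lemma normSq_pos_int (m n : ℤ) (h : ¬(m = 0 ∧ n = 0)) : 1 ≤ m^2+m*n+n^2 := by
  have key : 0 < (2*m+n)^2 + 3*n^2 := by
    rcases (by omega : 2*m+n ≠ 0 ∨ n ≠ 0) with h' | h'
    · positivity
    · positivity
  nlinarith [key]

lemma abs_eq_inv_sqrt3 {w : ℂ} :
    ‖w‖ = 1 / Real.sqrt 3 ↔ Complex.normSq w = 1/3 := by
  rw [Complex.norm_def, one_div, ← Real.sqrt_inv,
    Real.sqrt_inj (Complex.normSq_nonneg w) (by norm_num)]
  norm_num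

lemma abs_eq_one_iff {w : ℂ} : ‖w‖ = 1 ↔ Complex.normSq w = 1 := by
  rw [Complex.norm_def, show (1:ℝ) = Real.sqrt 1 by simp,
    Real.sqrt_inj (Complex.normSq_nonneg w) (by norm_num)]
  simp

lemma diff_eq (a b k l : ℤ) : triPt a b - (triPt k l - hexOffset)
    = ((a-k : ℤ):ℂ) + ((b-l : ℤ):ℂ) * Complex.exp (Real.pi * Complex.I / 3) + hexOffset := by
  simp only [triPt]; push_cast; ring

lemma isTriCorner_iff (p : ↥UpPts) (k l : ℤ) (hp : (p:ℂ) = triPt k l - hexOffset)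
    (z : ↥TriPts) :
    IsTriCorner p z ↔
      (z:ℂ) = triPt k l ∨ (z:ℂ) = triPt k (l-1) ∨ (z:ℂ) = triPt (k+1) (l-1) := by
  unfold IsTriCorner
  rw [abs_eq_inv_sqrt3]
  constructor
  · intro h
    obtain ⟨a, b, hz⟩ := z.2
    rw [hz, hp, diff_eq, normSq2] at h
    have h0 : ((a-k)^2 + (a-k)*(b-l) + (b-l)^2 + (b-l) : ℤ) = 0 := by
      have : (((a-k)^2 + (a-k)*(b-l) + (b-l)^2 + (b-l) : ℤ) : ℝ) = 0 := by linarith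
      exact_mod_cast this
    rw [hz]
    rcases solve_corner _ _ h0 with ⟨h1,h2⟩ | ⟨h1,h2⟩ | ⟨h1,h2⟩
    · left; congr 1 <;> omega
    · right; left; congr 1 <;> omega
    · right; right; congr 1 <;> omega
  · rintro (h | h | h) <;>
      rw [h, hp, diff_eq, normSq2] <;> norm_num

lemma up_rep (p : ↥UpPts) : ∃ k l : ℤ, (p:ℂ) = triPt k l - hexOffset := by
  obtain ⟨w, ⟨k, l, hw⟩, hpw⟩ := p.2
  exact ⟨k, l, by rw [hpw, hw]⟩

lemma triPt_mem (k l : ℤ) : triPt k l ∈ TriPts := ⟨k, l, rfl⟩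

lemma exists_corner (p : ↥UpPts) : ∃ z : ↥TriPts, IsTriCorner p z := by
  obtain ⟨k, l, hp⟩ := up_rep p
  exact ⟨⟨triPt k l, triPt_mem k l⟩, (isTriCorner_iff p k l hp _).2 (Or.inl rfl)⟩

lemma shared_corner {p q : ↥UpPts} (h : UpGraph.Adj p q) :
    ∃ z : ↥TriPts, IsTriCorner p z ∧ IsTriCorner q z := by
  obtain ⟨k, l, hp⟩ := up_rep p
  obtain ⟨k', l', hq⟩ := up_rep q
  have habs : ‖(p:ℂ) - (q:ℂ)‖ = 1 := h
  rw [abs_eq_one_iff] at habs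
  have hd : (p:ℂ) - (q:ℂ) = ((k-k' : ℤ):ℂ) + ((l-l' : ℤ):ℂ) * Complex.exp (Real.pi * Complex.I / 3) := by
    rw [hp, hq]; simp only [triPt]; push_cast; ring
  rw [hd, normSq1] at habs
  have h1 : ((k-k')^2 + (k-k')*(l-l') + (l-l')^2 : ℤ) = 1 := by exact_mod_cast habs
  have hiff := isTriCorner_iff p k l hp
  have hiff' := isTriCorner_iff q k' l' hq
  rcases solve_unit _ _ h1 with ⟨e1,e2⟩|⟨e1,e2⟩|⟨e1,e2⟩|⟨e1,e2⟩|⟨e1,e2⟩|⟨e1,e2⟩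
  · -- k = k'+1, l = l' : shared triPt k (l-1) = triPt (k'+1) (l'-1)
    refine ⟨⟨triPt k (l-1), triPt_mem _ _⟩, (hiff _).2 (Or.inr (Or.inl rfl)), (hiff' _).2 ?_⟩
    refine Or.inr (Or.inr (show triPt k (l-1) = triPt (k'+1) (l'-1) by congr 1 <;> omega))
  · -- k = k'-1, l = l' : p's triPt (k+1) (l-1) = q's triPt k' (l'-1)
    refine ⟨⟨triPt (k+1) (l-1), triPt_mem _ _⟩, (hiff _).2 (Or.inr (Or.inr rfl)), (hiff' _).2 ?_⟩
    refine Or.inr (Or.inl (show triPt (k+1) (l-1) = triPt k' (l'-1) by congr 1 <;> omega))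
  · -- l = l'+1 : p's triPt k (l-1) = q's triPt k' l'
    refine ⟨⟨triPt k (l-1), triPt_mem _ _⟩, (hiff _).2 (Or.inr (Or.inl rfl)), (hiff' _).2 ?_⟩
    refine Or.inl (show triPt k (l-1) = triPt k' l' by congr 1 <;> omega)
  · -- l = l'-1 : p's triPt k l = q's triPt k' (l'-1)
    refine ⟨⟨triPt k l, triPt_mem _ _⟩, (hiff _).2 (Or.inl rfl), (hiff' _).2 ?_⟩
    refine Or.inr (Or.inl (show triPt k l = triPt k' (l'-1) by congr 1 <;> omega))
  · -- k=k'+1, l=l'-1 : p's triPt k l = q's triPt (k'+1) (l'-1)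
    refine ⟨⟨triPt k l, triPt_mem _ _⟩, (hiff _).2 (Or.inl rfl), (hiff' _).2 ?_⟩
    refine Or.inr (Or.inr (show triPt k l = triPt (k'+1) (l'-1) by congr 1 <;> omega))
  · -- k=k'-1, l=l'+1 : p's triPt (k+1) (l-1) = q's triPt k' l'
    refine ⟨⟨triPt (k+1) (l-1), triPt_mem _ _⟩, (hiff _).2 (Or.inr (Or.inr rfl)), (hiff' _).2 ?_⟩
    refine Or.inl (show triPt (k+1) (l-1) = triPt k' l' by congr 1 <;> omega)

lemma adj_of_shared {p q : ↥UpPts} (hne : p ≠ q) {z : ↥TriPts}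
    (hp : IsTriCorner p z) (hq : IsTriCorner q z) : UpGraph.Adj p q := by
  obtain ⟨k, l, hpr⟩ := up_rep p
  obtain ⟨k', l', hqr⟩ := up_rep q
  have hd : (p:ℂ) - (q:ℂ) = ((k-k' : ℤ):ℂ) + ((l-l' : ℤ):ℂ) * Complex.exp (Real.pi * Complex.I / 3) := by
    rw [hpr, hqr]; simp only [triPt]; push_cast; ring
  have hle : ‖(p:ℂ) - (q:ℂ)‖ ≤ 2 / Real.sqrt 3 := by
    have := norm_sub_le_norm_sub_add_norm_sub (p:ℂ) (z:ℂ) (q:ℂ)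
    have h1 : ‖(p:ℂ) - (z:ℂ)‖ = 1 / Real.sqrt 3 := by
      rw [norm_sub_rev]; exact hp
    have h2 : ‖(z:ℂ) - (q:ℂ)‖ = 1 / Real.sqrt 3 := hq
    rw [h1, h2] at this
    have h3 : 1/Real.sqrt 3 + 1/Real.sqrt 3 = 2/Real.sqrt 3 := by ring
    linarith
  have hnz : ¬(k - k' = 0 ∧ l - l' = 0) := by
    rintro ⟨h1, h2⟩
    apply hne
    apply Subtype.ext
    rw [hpr, hqr]
    congr 2 <;> omega
  have hlow := normSq_pos_int _ _ hnz
  have hsq : Complex.normSq ((p:ℂ) - (q:ℂ)) ≤ 4/3 := by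
    have h0 : (0:ℝ) ≤ 2 / Real.sqrt 3 := by positivity
    have := mul_le_mul hle hle (norm_nonneg _) h0
    rw [← Complex.sq_norm]
    have h43 : 2 / Real.sqrt 3 * (2 / Real.sqrt 3) = 4/3 := by
      rw [div_mul_div_comm, sqrt3_sq]; norm_num
    nlinarith [norm_nonneg ((p:ℂ) - (q:ℂ))]
  rw [hd, normSq1] at hsq
  have hup : ((k-k')^2 + (k-k')*(l-l')+(l-l')^2 : ℤ) ≤ 1 := by
    by_contra hcon
    push_neg at hcon
    have : ((2:ℤ):ℝ) ≤ (((k-k')^2 + (k-k')*(l-l')+(l-l')^2 : ℤ) : ℝ) := by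
      exact_mod_cast hcon
    push_cast at this hsq; linarith
  have heq : ((k-k')^2 + (k-k')*(l-l')+(l-l')^2 : ℤ) = 1 := le_antisymm hup hlow
  show ‖(p:ℂ) - (q:ℂ)‖ = 1
  rw [abs_eq_one_iff, hd, normSq1, heq]
  norm_num

lemma corner_fiber_finite (p : ↥UpPts) : {z : ↥TriPts | IsTriCorner p z}.Finite := by
  obtain ⟨k, l, hp⟩ := up_rep p
  have hsub : {z : ↥TriPts | IsTriCorner p z} ⊆
      (Subtype.val) ⁻¹' {triPt k l, triPt k (l-1), triPt (k+1) (l-1)} := by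
    intro z hz
    rcases (isTriCorner_iff p k l hp z).1 hz with h | h | h
    · exact Or.inl h
    · exact Or.inr (Or.inl h)
    · exact Or.inr (Or.inr h)
  have hfin : ({triPt k l, triPt k (l-1), triPt (k+1) (l-1)} : Set ℂ).Finite := by
    apply Set.Finite.insert; apply Set.Finite.insert; exact Set.finite_singleton _
  exact Set.Finite.subset (Set.Finite.preimage (Subtype.val_injective.injOn) hfin) hsub

def topCorner (p : ↥UpPts) : ↥TriPts :=
  ⟨(p:ℂ) + hexOffset, by
    obtain ⟨w, hw, hpw⟩ := p.2
    rw [hpw]; simpa using hw⟩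

lemma topCorner_isCorner (p : ↥UpPts) : IsTriCorner p (topCorner p) := by
  show ‖(p:ℂ) + hexOffset - (p:ℂ)‖ = 1 / Real.sqrt 3
  rw [add_sub_cancel_left, abs_eq_inv_sqrt3, hexOffset_eq]
  simp only [Complex.normSq_apply]
  rw [← mul_inv, sqrt3_sq]
  norm_num

lemma topCorner_inj : Function.Injective topCorner := by
  intro p q h
  apply Subtype.ext
  have h2 : (p:ℂ) + hexOffset = (q:ℂ) + hexOffset := congrArg Subtype.val h
  exact add_right_cancel h2

section Graph
variable (ξ : Set ↥UpPts)

lemma tri_reach {p : ↥UpPts} (hp : p ∈ ξ) {z w : ↥TriPts}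
    (hz : IsTriCorner p z) (hw : IsTriCorner p w) :
    (SimpleGraph.fromEdgeSet (DeltaEdges ξ)).Reachable z w := by
  by_cases h : z = w
  · subst h; exact SimpleGraph.Reachable.refl z
  · exact SimpleGraph.Adj.reachable
      ((SimpleGraph.fromEdgeSet_adj _).2 ⟨⟨p, hp, z, w, h, hz, hw, rfl⟩, h⟩)

lemma edge_corner {z w : ↥TriPts} (h : s(z,w) ∈ DeltaEdges ξ) :
    ∃ p, p ∈ ξ ∧ IsTriCorner p z ∧ IsTriCorner p w := by
  obtain ⟨p, hp, a, b, hab, ha, hb, he⟩ := h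
  rcases Sym2.eq_iff.1 he with ⟨h1, h2⟩ | ⟨h1, h2⟩ <;> subst h1 <;> subst h2
  · exact ⟨p, hp, ha, hb⟩
  · exact ⟨p, hp, hb, ha⟩

lemma reach_of_shared {p q : ↥UpPts} (hp : p ∈ ξ) (hq : q ∈ ξ) {z : ↥TriPts}
    (h1 : IsTriCorner p z) (h2 : IsTriCorner q z) :
    (UpGraph.induce ξ).Reachable ⟨p, hp⟩ ⟨q, hq⟩ := by
  by_cases hpq : p = q
  · subst hpq; exact SimpleGraph.Reachable.refl _
  · exact SimpleGraph.Adj.reachable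
      (show UpGraph.Adj p q from adj_of_shared hpq h1 h2)

lemma forward_walk : ∀ {a b : ↥(ξ : Set ↥UpPts)}, (UpGraph.induce ξ).Walk a b →
    ∀ z w : ↥TriPts, IsTriCorner ↑a z → IsTriCorner ↑b w →
    (SimpleGraph.fromEdgeSet (DeltaEdges ξ)).Reachable z w := by
  intro a b wk
  induction wk with
  | nil =>
    intro z w hz hw
    exact tri_reach ξ (Subtype.coe_prop _) hz hw
  | @cons u v b' h p ih =>
    intro z w hz hw
    obtain ⟨c, hc1, hc2⟩ := shared_corner (show UpGraph.Adj ↑u ↑v from h)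
    exact (tri_reach ξ u.2 hz hc1).trans (ih c w hc2 hw)

lemma backward_walk : ∀ {z w : ↥TriPts},
    (SimpleGraph.fromEdgeSet (DeltaEdges ξ)).Walk z w →
    ∀ (p q : ↥UpPts) (hp : p ∈ ξ) (hq : q ∈ ξ),
      IsTriCorner p z → IsTriCorner q w →
      (UpGraph.induce ξ).Reachable ⟨p, hp⟩ ⟨q, hq⟩ := by
  intro z w wk
  induction wk with
  | nil =>
    intro p q hp hq h1 h2
    exact reach_of_shared ξ hp hq h1 h2
  | @cons z' x w' h wk ih =>
    intro p q hp hq h1 h2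
    have hadj := ((SimpleGraph.fromEdgeSet_adj _).1 h).1
    obtain ⟨r, hr, hrz, hrx⟩ := edge_corner ξ hadj
    exact (reach_of_shared ξ hp hr h1 hrz).trans (ih r q hr hq hrx h2)

end Graph

theorem delta_connectivity' (ξ : Set ↥UpPts) :
    (∀ (u v : ↥UpPts) (hu : u ∈ ξ) (hv : v ∈ ξ),
      (UpGraph.induce ξ).Reachable ⟨u, hu⟩ ⟨v, hv⟩ ↔
        ∀ z w : ↥TriPts, IsTriCorner u z → IsTriCorner v w →
          (SimpleGraph.fromEdgeSet (DeltaEdges ξ)).Reachable z w) ∧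
    ((∃ c : (UpGraph.induce ξ).ConnectedComponent, c.supp.Infinite) ↔
      (∃ c : (SimpleGraph.fromEdgeSet (DeltaEdges ξ)).ConnectedComponent, c.supp.Infinite)) := by
  have main : ∀ (u v : ↥UpPts) (hu : u ∈ ξ) (hv : v ∈ ξ),
      (UpGraph.induce ξ).Reachable ⟨u, hu⟩ ⟨v, hv⟩ ↔
        ∀ z w : ↥TriPts, IsTriCorner u z → IsTriCorner v w →
          (SimpleGraph.fromEdgeSet (DeltaEdges ξ)).Reachable z w := by
    intro u v hu hv
    constructor
    · intro h z w hz hw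
      obtain ⟨wk⟩ := h
      exact forward_walk ξ wk z w hz hw
    · intro h
      obtain ⟨z, hz⟩ := exists_corner u
      obtain ⟨w, hw⟩ := exists_corner v
      obtain ⟨wk⟩ := h z w hz hw
      exact backward_walk ξ wk u v hu hv hz hw
  refine ⟨main, ?_, ?_⟩
  · rintro ⟨c, hc⟩
    obtain ⟨x, hx⟩ := hc.nonempty
    refine ⟨(SimpleGraph.fromEdgeSet (DeltaEdges ξ)).connectedComponentMk (topCorner ↑x), ?_⟩
    have hinj : Function.Injective (fun y : ↥ξ => topCorner ↑y) :=
      fun a b h => Subtype.val_injective (topCorner_inj h)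
    apply Set.Infinite.mono ?_ (hc.image hinj.injOn)
    rintro t ⟨y, hy, rfl⟩
    rw [SimpleGraph.ConnectedComponent.mem_supp_iff]
    rw [SimpleGraph.ConnectedComponent.mem_supp_iff] at hy hx
    have hreach : (UpGraph.induce ξ).Reachable x y :=
      SimpleGraph.ConnectedComponent.exact (hx.trans hy.symm)
    obtain ⟨wk⟩ := hreach
    have := forward_walk ξ wk (topCorner ↑x) (topCorner ↑y)
      (topCorner_isCorner ↑x) (topCorner_isCorner ↑y)
    exact (SimpleGraph.ConnectedComponent.sound this).symm
  · rintro ⟨c, hc⟩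
    have hex : ∀ z : ↥TriPts, z ∈ c.supp → ∃ p : ↥UpPts, p ∈ ξ ∧ IsTriCorner p z := by
      intro z hz
      obtain ⟨z', hz'⟩ := (hc.diff (Set.finite_singleton z)).nonempty
      have hne : z ≠ z' := fun h => hz'.2 (by rw [← h]; exact rfl)
      rw [SimpleGraph.ConnectedComponent.mem_supp_iff] at hz
      have hz'm := hz'.1
      rw [SimpleGraph.ConnectedComponent.mem_supp_iff] at hz'm
      have hreach : (SimpleGraph.fromEdgeSet (DeltaEdges ξ)).Reachable z z' :=
        SimpleGraph.ConnectedComponent.exact (hz.trans hz'm.symm)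
      obtain ⟨wk⟩ := hreach
      cases wk with
      | nil => exact absurd rfl hne
      | cons h _ =>
        have hmem := ((SimpleGraph.fromEdgeSet_adj _).1 h).1
        obtain ⟨p, hp, hpz, _⟩ := edge_corner ξ hmem
        exact ⟨p, hp, hpz⟩
    obtain ⟨z₀, hz₀⟩ := hc.nonempty
    obtain ⟨p₀, hp₀, hcor₀⟩ := hex z₀ hz₀
    refine ⟨(UpGraph.induce ξ).connectedComponentMk ⟨p₀, hp₀⟩, ?_⟩
    by_contra hfin
    rw [Set.not_infinite] at hfin
    have hcover : c.supp ⊆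
        ⋃ x ∈ ((UpGraph.induce ξ).connectedComponentMk ⟨p₀, hp₀⟩).supp,
          {z : ↥TriPts | IsTriCorner (↑x : ↥UpPts) z} := by
      intro z hz
      obtain ⟨p, hp, hcor⟩ := hex z hz
      rw [SimpleGraph.ConnectedComponent.mem_supp_iff] at hz
      have hz₀' := hz₀
      rw [SimpleGraph.ConnectedComponent.mem_supp_iff] at hz₀'
      have hreach : (SimpleGraph.fromEdgeSet (DeltaEdges ξ)).Reachable z₀ z :=
        SimpleGraph.ConnectedComponent.exact (hz₀'.trans hz.symm)
      obtain ⟨wk⟩ := hreach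
      have hind := backward_walk ξ wk p₀ p hp₀ hp hcor₀ hcor
      have hmem : (⟨p, hp⟩ : ↥ξ) ∈ ((UpGraph.induce ξ).connectedComponentMk ⟨p₀, hp₀⟩).supp := by
        rw [SimpleGraph.ConnectedComponent.mem_supp_iff]
        exact (SimpleGraph.ConnectedComponent.sound hind).symm
      exact Set.mem_biUnion hmem hcor
    exact absurd hc (Set.Finite.subset
      (hfin.biUnion fun x _ => corner_fiber_finite ↑x) hcover).not_infinite


/-- For `ξ ⊆ V↑(H)` and `u, v ∈ ξ`: `u` and `v` lie in the same connected
component of the subgraph of `V↑(H)` induced by `ξ` if and only if the corners of the triangle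
of `T` corresponding to `u` are connected, in the spanning subgraph `(T, Δ(ξ))`, to the corners
of the triangle corresponding to `v`.  In particular, `ξ` contains an infinite connected
component if and only if `Δ(ξ)` does. -/
theorem delta_connectivity (ξ : Set ↥UpPts) :
    (∀ (u v : ↥UpPts) (hu : u ∈ ξ) (hv : v ∈ ξ),
      (UpGraph.induce ξ).Reachable ⟨u, hu⟩ ⟨v, hv⟩ ↔
        ∀ z w : ↥TriPts, IsTriCorner u z → IsTriCorner v w →
          (SimpleGraph.fromEdgeSet (DeltaEdges ξ)).Reachable z w) ∧
    ((∃ c : (UpGraph.induce ξ).ConnectedComponent, c.supp.Infinite) ↔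
      (∃ c : (SimpleGraph.fromEdgeSet (DeltaEdges ξ)).ConnectedComponent, c.supp.Infinite)) := by
  exact delta_connectivity' ξ
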